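/- Let g be a finite-dimensional simple Lie algebra over a field of characteristic 0 and let h be a Lie subalgebra of g such that the restriction of the Killing form of g to h is nondegenerate. Let h^⊥ be the orthogonal complement of h with respect to the Killing form. Then the Lie subalgebra of g generated by h^⊥ is an ideal of g; in particular, if h ≠ g, then this subalgebra equals g. -/

import Mathlib

/-- Let `g` be a finite-dimensional simple Lie algebra over a field of characteristic zero and
let `h` be a Lie subalgebra on which the Killing form of `g` is nondegenerate.  Then the Lie
subalgebra generated by the orthogonal complement `h^⊥` (with respect to the Killing form) is
an ideal of `g`; in particular, if `h ≠ g` then this subalgebra equals `g`. -/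
theorem lieSpan_orthogonal_isIdeal
    (k : Type*) [Field k] [CharZero k]
    (g : Type*) [LieRing g] [LieAlgebra k g] [FiniteDimensional k g] [LieAlgebra.IsSimple k g]
    (h : LieSubalgebra k g)
    (hnd : ∀ x ∈ h, (∀ y ∈ h, killingForm k g x y = 0) → x = 0) :
    (∀ x : g, ∀ y ∈ LieSubalgebra.lieSpan k g {z : g | ∀ m ∈ h, killingForm k g z m = 0},
        ⁅x, y⁆ ∈ LieSubalgebra.lieSpan k g {z : g | ∀ m ∈ h, killingForm k g z m = 0}) ∧
    (h ≠ ⊤ →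
      LieSubalgebra.lieSpan k g {z : g | ∀ m ∈ h, killingForm k g z m = 0} = ⊤) := by
  have hrefl : (killingForm k g).IsRefl := (LieModule.traceForm_isSymm k g g).isRefl
  set S : Set g := {z : g | ∀ m ∈ h, killingForm k g z m = 0} with hSdef
  set sp := LieSubalgebra.lieSpan k g S with hsp
  -- S is invariant under the adjoint action of h
  have hinv : ∀ a ∈ h, ∀ z ∈ S, ⁅a, z⁆ ∈ S := by
    intro a ha z hz m hm
    have : killingForm k g ⁅a, z⁆ m = - killingForm k g z ⁅a, m⁆ :=
      LieModule.traceForm_apply_lie_apply' k g g a z m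
    rw [this, hz _ (h.lie_mem ha hm), neg_zero]
  -- the restricted form is nondegenerate
  have hres : ((killingForm k g).restrict h.toSubmodule).Nondegenerate := by
    refine ⟨?_, ?_⟩
    · rintro ⟨x, hx⟩ hx0
      exact Subtype.ext (hnd x hx fun y hy => hx0 ⟨y, hy⟩)
    · rintro ⟨x, hx⟩ hx0
      exact Subtype.ext (hnd x hx fun y hy => hrefl y x (hx0 ⟨y, hy⟩))
  have hcompl : IsCompl h.toSubmodule ((killingForm k g).orthogonal h.toSubmodule) :=
    LinearMap.BilinForm.isCompl_orthogonal_of_restrict_nondegenerate hrefl hres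
  have horthS : ∀ z, z ∈ (killingForm k g).orthogonal h.toSubmodule ↔ z ∈ S := by
    intro z
    rw [LinearMap.BilinForm.mem_orthogonal_iff]
    exact ⟨fun hz m hm => hrefl m z (hz m hm), fun hz m hm => hrefl z m (hz m hm)⟩
  -- the span is invariant under ad of elements of h
  have key : ∀ y ∈ sp, ∀ a ∈ h, ⁅a, y⁆ ∈ sp := by
    let K : LieSubalgebra k g :=
      { carrier := {y | y ∈ sp ∧ ∀ a ∈ h, ⁅a, y⁆ ∈ sp}
        add_mem' := by
          rintro y z ⟨hy1, hy2⟩ ⟨hz1, hz2⟩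
          exact ⟨sp.add_mem hy1 hz1, fun a ha => by
            rw [lie_add]; exact sp.add_mem (hy2 a ha) (hz2 a ha)⟩
        zero_mem' := ⟨sp.zero_mem, fun a ha => by rw [lie_zero]; exact sp.zero_mem⟩
        smul_mem' := by
          rintro c y ⟨hy1, hy2⟩
          exact ⟨sp.smul_mem c hy1, fun a ha => by
            rw [lie_smul]; exact sp.smul_mem c (hy2 a ha)⟩
        lie_mem' := by
          rintro y z ⟨hy1, hy2⟩ ⟨hz1, hz2⟩
          refine ⟨sp.lie_mem hy1 hz1, fun a ha => ?_⟩
          rw [leibniz_lie]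
          exact sp.add_mem (sp.lie_mem (hy2 a ha) hz1) (sp.lie_mem hy1 (hz2 a ha)) }
    have hSK : S ⊆ K := fun z hz =>
      ⟨LieSubalgebra.subset_lieSpan hz, fun a ha =>
        LieSubalgebra.subset_lieSpan (hinv a ha z hz)⟩
    intro y hy a ha
    exact ((LieSubalgebra.lieSpan_le.mpr hSK) hy).2 a ha
  have part1 : ∀ x : g, ∀ y ∈ sp, ⁅x, y⁆ ∈ sp := by
    intro x y hy
    obtain ⟨a, ha, b, hb, rfl⟩ : ∃ a ∈ h.toSubmodule,
        ∃ b ∈ (killingForm k g).orthogonal h.toSubmodule, a + b = x :=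
      Submodule.mem_sup.mp (hcompl.sup_eq_top ▸ Submodule.mem_top)
    rw [add_lie]
    exact sp.add_mem (key y hy a ha)
      (sp.lie_mem (LieSubalgebra.subset_lieSpan ((horthS b).mp hb)) hy)
  refine ⟨part1, fun hne => ?_⟩
  let I : LieIdeal k g :=
    { sp.toSubmodule with lie_mem := fun {x m} hm => part1 x m hm }
  rcases LieAlgebra.IsSimple.eq_bot_or_eq_top I with hI | hI
  · exfalso
    apply hne
    have horth : (killingForm k g).orthogonal h.toSubmodule = ⊥ := by
      rw [eq_bot_iff]
      intro z hz
      have hzI : z ∈ I := LieSubalgebra.subset_lieSpan ((horthS z).mp hz)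
      rw [hI] at hzI
      simpa using hzI
    have hsup := hcompl.sup_eq_top
    rw [horth, sup_bot_eq] at hsup
    ext x
    simp only [LieSubalgebra.mem_top]
    exact iff_of_true (by rw [← LieSubalgebra.mem_toSubmodule, hsup]; trivial) trivial
  · rw [eq_top_iff]
    intro x _
    have hxI : x ∈ I := by rw [hI]; trivial
    exact hxI
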